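/- (⊕_ω ℤ) ⊕ ℤ^ω is not isomorphic to ℤ^ω. -/

import Mathlib

lemma sum_single_apply (g : ℕ → ℤ) (K m : ℕ) :
    (∑ n ∈ Finset.range K, g n • Pi.single n (1:ℤ)) m = if m < K then g m else 0 := by
  rw [Finset.sum_apply]
  simp only [Pi.smul_apply, Pi.single_apply, smul_eq_mul, mul_ite, mul_one, mul_zero]
  rw [Finset.sum_ite_eq (Finset.range K) m g]; simp [Finset.mem_range]

lemma dvd_hom (f : ((ℕ → ℤ)) →+ ℤ) (d : ℤ) (y : ℕ → ℤ) (h : ∀ n, d ∣ y n) : d ∣ f y := by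
  have : y = d • fun n => y n / d := by
    funext n; simp [Int.mul_ediv_cancel' (h n)]
  rw [this, map_zsmul, zsmul_eq_mul]
  exact Dvd.intro _ rfl

lemma split_fun (x : ℕ → ℤ) (K : ℕ) :
    x = (∑ n ∈ Finset.range K, x n • Pi.single n (1:ℤ)) + fun n => if n < K then 0 else x n := by
  funext m
  simp only [Pi.add_apply, sum_single_apply]
  by_cases h : m < K <;> simp [h]

/-- If a hom vanishes on divisible-by-geometric coordinates functions … helper:
if every coordinate of `x` is of the form `p^n * u n` (p ≥ 2), and f kills all basis vectors,
then f x = 0. -/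
lemma vanish_geom (f : ((ℕ → ℤ)) →+ ℤ) (hf : ∀ n, f (Pi.single n 1) = 0)
    (p : ℤ) (hp : 2 ≤ p) (u : ℕ → ℤ) : f (fun n => p ^ n * u n) = 0 := by
  set x : ℕ → ℤ := fun n => p ^ n * u n with hx
  have key : ∀ K : ℕ, p ^ K ∣ f x := by
    intro K
    have hsplit := split_fun x K
    rw [hsplit, map_add, map_sum]
    have h1 : ∀ n ∈ Finset.range K, f (x n • Pi.single n (1:ℤ)) = 0 := by
      intro n _; rw [map_zsmul, hf n, smul_zero]
    rw [Finset.sum_eq_zero h1, zero_add]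
    apply dvd_hom
    intro n
    by_cases h : n < K
    · simp [h]
    · simp only [h, if_false]
      push_neg at h
      exact Dvd.dvd.mul_right (pow_dvd_pow p h) _
  by_contra h0
  obtain ⟨K, hK⟩ : ∃ K : ℕ, |f x| < p ^ K := by
    refine ⟨(f x).natAbs, ?_⟩
    calc |f x| = ((f x).natAbs : ℤ) := by rw [Int.abs_eq_natAbs]
    _ < 2 ^ (f x).natAbs := by exact_mod_cast Nat.lt_two_pow_self
    _ ≤ p ^ (f x).natAbs := pow_le_pow_left₀ (by norm_num) hp _
  exact h0 (Int.eq_zero_of_abs_lt_dvd (key K) hK)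

/-- Specker part 2: a hom vanishing on all basis vectors is zero. -/
lemma specker_vanish (f : ((ℕ → ℤ)) →+ ℤ) (hf : ∀ n, f (Pi.single n 1) = 0)
    (x : ℕ → ℤ) : f x = 0 := by
  have h23 : ∀ n : ℕ, ∃ uv : ℤ × ℤ, x n = 2 ^ n * uv.1 + 3 ^ n * uv.2 := by
    intro n
    have hcop : IsCoprime (2 ^ n : ℤ) (3 ^ n : ℤ) := by
      apply IsCoprime.pow
      rw [Int.isCoprime_iff_gcd_eq_one]; decide
    obtain ⟨a, b, hab⟩ := hcop
    exact ⟨(a * x n, b * x n), by linear_combination (x n) * hab.symm⟩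
  choose uv huv using h23
  have hx : x = (fun n => 2 ^ n * (uv n).1) + fun n => 3 ^ n * (uv n).2 := by
    funext n; exact huv n
  rw [hx, map_add, vanish_geom f hf 2 le_rfl, vanish_geom f hf 3 (by norm_num), add_zero]


/-- Specker recursion: given `c : ℕ → ℤ`, produce pairs (D_K, s_K). -/
noncomputable def spk (c : ℕ → ℤ) : ℕ → ℤ × ℤ
  | 0 => (1, 0)
  | K + 1 =>
    let p := spk c K
    let s' := p.2 + p.1 * c K
    (p.1 * (2 * |s'| + 2), s')

noncomputable def spkD (c : ℕ → ℤ) (K : ℕ) : ℤ := (spk c K).1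
noncomputable def spkS (c : ℕ → ℤ) (K : ℕ) : ℤ := (spk c K).2

lemma spkS_succ (c : ℕ → ℤ) (K : ℕ) :
    spkS c (K + 1) = spkS c K + spkD c K * c K := rfl

lemma spkD_succ (c : ℕ → ℤ) (K : ℕ) :
    spkD c (K + 1) = spkD c K * (2 * |spkS c (K + 1)| + 2) := rfl

lemma spkD_pos (c : ℕ → ℤ) (K : ℕ) : 0 < spkD c K := by
  induction K with
  | zero => exact one_pos
  | succ K ih =>
    rw [spkD_succ]
    exact mul_pos ih (by positivity)

lemma spkD_ge (c : ℕ → ℤ) (K : ℕ) : (2:ℤ) ^ K ≤ spkD c K := by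
  induction K with
  | zero => simp [spkD, spk]
  | succ K ih =>
    rw [spkD_succ, pow_succ]
    have h2 : (2:ℤ) ≤ 2 * |spkS c (K + 1)| + 2 := by nlinarith [abs_nonneg (spkS c (K+1))]
    calc (2:ℤ)^K * 2 ≤ spkD c K * 2 := by nlinarith [spkD_pos c K]
    _ ≤ spkD c K * (2 * |spkS c (K + 1)| + 2) := by nlinarith [spkD_pos c K]

lemma spkS_bound (c : ℕ → ℤ) (K : ℕ) : 2 * |spkS c (K + 1)| < spkD c (K + 1) := by
  rw [spkD_succ]
  nlinarith [spkD_pos c K, abs_nonneg (spkS c (K+1))]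

lemma spkD_dvd (c : ℕ → ℤ) {K L : ℕ} (h : K ≤ L) : spkD c K ∣ spkD c L := by
  induction L with
  | zero => rw [Nat.le_zero.mp h]
  | succ L ih =>
    rcases Nat.lt_or_ge K (L+1) with h' | h'
    · exact (ih (Nat.lt_succ_iff.mp h')).mul_right _
    · rw [Nat.le_antisymm h h']

lemma spkS_sum (c : ℕ → ℤ) (K : ℕ) :
    spkS c K = ∑ k ∈ Finset.range K, spkD c k * c k := by
  induction K with
  | zero => rfl
  | succ K ih => rw [spkS_succ, Finset.sum_range_succ, ih]

lemma specker_finite (f : ((ℕ → ℤ)) →+ ℤ) : {n | f (Pi.single n 1) ≠ 0}.Finite := by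
  by_contra hinf
  rw [← Set.not_infinite, not_not] at hinf
  set emb := hinf.natEmbedding with hemb
  set ν : ℕ → ℕ := fun k => (emb k : ℕ) with hνdef
  have hν : Function.Injective ν := fun a b h => emb.injective (Subtype.ext h)
  set c : ℕ → ℤ := fun k => f (Pi.single (ν k) 1) with hcdef
  have hc : ∀ k, c k ≠ 0 := fun k => (emb k).2
  set D := spkD c with hD
  set s := spkS c with hs
  set x : ℕ → ℤ := Function.extend ν (fun k => D k) 0 with hxdef
  have key : ∀ K, D K ∣ f x - s K := by
    intro K
    set y : ℕ → ℤ := Function.extend ν (fun k => if K ≤ k then D k / D K else 0) 0 with hydef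
    have hxy : x = (∑ k ∈ Finset.range K, D k • Pi.single (ν k) (1:ℤ)) + D K • y := by
      funext m
      simp only [Pi.add_apply, Finset.sum_apply, Pi.smul_apply, Pi.single_apply, smul_eq_mul]
      by_cases hm : ∃ k, ν k = m
      · obtain ⟨k, rfl⟩ := hm
        rw [show x (ν k) = D k from hν.extend_apply _ _ _,
            show y (ν k) = _ from hν.extend_apply _ _ _]
        have hsum : (∑ j ∈ Finset.range K, D j * if ν k = ν j then (1:ℤ) else 0)
            = if k < K then D k else 0 := by
          have hind : ∀ j, (D j * if ν k = ν j then (1:ℤ) else 0) = if k = j then D j else 0 := by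
            intro j
            by_cases h : k = j
            · simp [h]
            · rw [if_neg (fun he => h (hν he)), if_neg h, mul_zero]
          simp_rw [hind]
          rw [Finset.sum_ite_eq (Finset.range K) k D]
          simp [Finset.mem_range]
        rw [hsum]
        by_cases hk : k < K
        · rw [if_pos hk, if_neg (not_le.mpr hk), mul_zero, add_zero]
        · push_neg at hk
          rw [if_neg (not_lt.mpr hk), if_pos hk, zero_add,
            Int.mul_ediv_cancel' (spkD_dvd c hk)]
      · rw [hxdef, hydef, Function.extend_apply' _ _ _ hm, Function.extend_apply' _ _ _ hm]
        have hz : ∀ j ∈ Finset.range K, D j * (if m = ν j then (1:ℤ) else 0) = 0 := by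
          intro j _
          rw [if_neg (fun h => hm ⟨j, h.symm⟩), mul_zero]
        rw [Finset.sum_eq_zero hz]
        simp
    have hfx := congrArg f hxy
    rw [map_add, map_sum, map_zsmul] at hfx
    have hsK : (∑ k ∈ Finset.range K, f (D k • Pi.single (ν k) (1:ℤ))) = s K := by
      rw [hs, spkS_sum]
      refine Finset.sum_congr rfl fun k _ => ?_
      rw [map_zsmul, zsmul_eq_mul, Int.cast_id]
    rw [hsK, zsmul_eq_mul, Int.cast_id] at hfx
    exact ⟨f y, by linarith⟩
  -- final contradiction
  obtain ⟨M, hM⟩ : ∃ M : ℕ, 2 * |f x| < 2 ^ M := by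
    refine ⟨(2 * |f x|).natAbs, ?_⟩
    calc 2 * |f x| ≤ ((2 * |f x|).natAbs : ℤ) := Int.le_natAbs
    _ < 2 ^ (2 * |f x|).natAbs := by exact_mod_cast Nat.lt_two_pow_self
  have heq : ∀ K, M ≤ K → f x = s (K + 1) := by
    intro K hK
    have h1 : 2 * |f x| < D (K + 1) := by
      calc 2 * |f x| < 2 ^ M := hM
      _ ≤ (2:ℤ) ^ (K + 1) := pow_le_pow_right₀ (by norm_num) (by omega)
      _ ≤ D (K + 1) := spkD_ge c (K + 1)
    have h2 : 2 * |s (K + 1)| < D (K + 1) := spkS_bound c K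
    have h3 : |f x - s (K + 1)| < D (K + 1) := by
      have := abs_sub (f x) (s (K + 1))
      have h4 : |f x - s (K+1)| ≤ |f x| + |s (K+1)| := abs_sub _ _
      linarith
    have := Int.eq_zero_of_abs_lt_dvd (key (K + 1)) h3
    linarith
  have e1 := heq M le_rfl
  have e2 := heq (M + 1) (by omega)
  have e3 : s (M + 2) = s (M + 1) + D (M + 1) * c (M + 1) := spkS_succ c (M + 1)
  have hzero : D (M + 1) * c (M + 1) = 0 := by
    rw [show M + 1 + 1 = M + 2 from rfl] at e2
    linarith
  rcases mul_eq_zero.mp hzero with h | h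
  · exact absurd h (ne_of_gt (spkD_pos c (M + 1)))
  · exact hc (M + 1) h


/-- (⊕_ω ℤ) ⊕ ℤ^ω is not isomorphic to ℤ^ω. -/
theorem sum_plus_product_not_iso_product :
    IsEmpty (((ℕ →₀ ℤ) × (ℕ → ℤ)) ≃+ (ℕ → ℤ)) := by
  constructor
  intro e
  classical
  -- From `c : ℕ → ℤ` build a hom on the product, then transport along `e.symm`.
  set J : (ℕ → ℤ) → (((ℕ →₀ ℤ) × (ℕ → ℤ)) →+ ℤ) := fun cf =>
    (Finsupp.liftAddHom (fun n => AddMonoidHom.mulRight (cf n))).comp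
      (AddMonoidHom.fst (ℕ →₀ ℤ) (ℕ → ℤ)) with hJ
  have hJeval : ∀ (cf : ℕ → ℤ) (n : ℕ), J cf (Finsupp.single n 1, 0) = cf n := by
    intro cf n
    simp [hJ, Finsupp.liftAddHom_apply_single]
  set Kmap : (ℕ → ℤ) → ((ℕ → ℤ) →+ ℤ) := fun cf =>
    (J cf).comp e.symm.toAddMonoidHom with hK
  have hKinj : Function.Injective Kmap := by
    intro c1 c2 h
    funext n
    have h2 : ∀ z, J c1 z = J c2 z := by
      intro z
      have := congrArg (fun g => (g : (ℕ → ℤ) →+ ℤ) (e z)) h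
      simpa [hK] using this
    rw [← hJeval c1 n, ← hJeval c2 n, h2]
  set Φ : ((ℕ → ℤ) →+ ℤ) → (ℕ →₀ ℤ) := fun f =>
    Finsupp.ofSupportFinite (fun n => f (Pi.single n 1)) (specker_finite f) with hΦ
  have hΦinj : Function.Injective Φ := by
    intro f g h
    have hfg : ∀ n, f (Pi.single n 1) = g (Pi.single n 1) := by
      intro n
      have := congrArg (fun p => (p : ℕ →₀ ℤ) n) h
      exact this
    ext x
    have := specker_vanish (f - g) (by intro n; simp [hfg n]) x
    simp only [AddMonoidHom.sub_apply, sub_eq_zero] at this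
    exact this
  have hcount : Countable (ℕ → ℤ) :=
    Function.Injective.countable (hΦinj.comp hKinj)
  have hι : Function.Injective (fun (S : Set ℕ) => (fun n => if n ∈ S then (1:ℤ) else 0)) := by
    intro S T h
    ext n
    have := congrFun h n
    by_cases h1 : n ∈ S <;> by_cases h2 : n ∈ T <;> simp_all
  have : Countable (Set ℕ) := hι.countable
  obtain ⟨g, hg⟩ := exists_surjective_nat (Set ℕ)
  exact Function.cantor_surjective g hg
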